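/- Let m and w be independent square-integrable real random variables on a probability space (Ω, ℱ, ℙ) with 𝔼[m] = 0. Let γ : ℝ → ℝ be measurable with x = γ(m) square-integrable, set y = x + w, and let u = 𝔼[m | σ(y)]. Then for all real a and b, 𝔼[(a·m − b − u)²] = (2a − 1)·𝔼[(m − u)²] + (a − 1)²·𝔼[m²] + b². In particular, the encoder's total expected cost in the noisy signaling game equals (2a−1)·D + ρ·P + (a−1)²·𝔼[m²] + b², where D = 𝔼[(m − u)²] is the decoder's mean squared error and P = 𝔼[x²] is the transmission power. -/

import Mathlib

open MeasureTheory

lemma memLp_two_condexp {Ω : Type*} {m F : MeasurableSpace Ω} {μ : Measure Ω}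
    [IsFiniteMeasure μ] (hle : m ≤ F) {f : Ω → ℝ} (hf : MemLp f 2 μ) :
    MemLp (μ[f|m]) 2 μ := by
  haveI : SigmaFinite (μ.trim hle) := by infer_instance
  have hg : (condExpL2 ℝ ℝ hle (hf.toLp f) : Ω → ℝ) =ᵐ[μ] μ[f|m] := by
    refine ae_eq_condExp_of_forall_setIntegral_eq hle
      (memLp_one_iff_integrable.1 (hf.mono_exponent (by norm_num))) ?_ ?_ ?_
    · intro s _ _
      exact (integrable_condExpL2_of_isFiniteMeasure hle).integrableOn
    · intro s hs hμs
      rw [integral_condExpL2_eq hle (hf.toLp f) hs hμs.ne]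
      exact setIntegral_congr_ae (hle s hs) ((hf.coeFn_toLp).mono fun x hx _ => hx)
    · exact aestronglyMeasurable_condExpL2 hle _
  exact (Lp.memLp _).ae_eq hg

lemma integrable_mul_of_memLp_two {Ω : Type*} {F : MeasurableSpace Ω} {μ : Measure Ω}
    {f g : Ω → ℝ} (hf : MemLp f 2 μ) (hg : MemLp g 2 μ) :
    Integrable (fun ω => f ω * g ω) μ := by
  have h1 : Integrable (fun ω => (f ω + g ω) ^ 2) μ := (hf.add hg).integrable_sq
  have h2 := hf.integrable_sq
  have h3 := hg.integrable_sq
  have : Integrable (fun ω => ((f ω + g ω) ^ 2 - f ω ^ 2 - g ω ^ 2) * (1/2)) μ :=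
    ((h1.sub h2).sub h3).mul_const _
  refine this.congr (Filter.Eventually.of_forall fun ω => by ring)

/-- Noisy-channel cost decomposition: with `y = γ(m) + w` and `u = 𝔼[m | σ(y)]`,
`𝔼[(a·m − b − u)²] = (2a − 1)·𝔼[(m − u)²] + (a − 1)²·𝔼[m²] + b²`, and hence the
encoder's total cost is `(2a−1)·D + ρ·P + (a−1)²·𝔼[m²] + b²` with `D` the decoder's
MSE and `P = 𝔼[x²]` the transmission power. -/
theorem stmt_11 {Ω : Type*} {F : MeasurableSpace Ω} {μ : Measure Ω} [IsProbabilityMeasure μ]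
    (m w : Ω → ℝ) (hm : Measurable m) (hw : Measurable w)
    (hm2 : MemLp m 2 μ) (hw2 : MemLp w 2 μ)
    (hindep : ProbabilityTheory.IndepFun m w μ) (hmean : ∫ ω, m ω ∂μ = 0)
    (γ : ℝ → ℝ) (hγ : Measurable γ) (hx2 : MemLp (fun ω => γ (m ω)) 2 μ)
    (a b ρ : ℝ) (hρ : 0 ≤ ρ) :
    (∫ ω, (a * m ω - b -
        (μ[m | MeasurableSpace.comap (fun ω => γ (m ω) + w ω) inferInstance]) ω) ^ 2 ∂μ
      = (2 * a - 1) *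
          ∫ ω, (m ω -
            (μ[m | MeasurableSpace.comap (fun ω => γ (m ω) + w ω) inferInstance]) ω) ^ 2 ∂μ
        + (a - 1) ^ 2 * ∫ ω, (m ω) ^ 2 ∂μ + b ^ 2) ∧
    ((∫ ω, (a * m ω - b -
        (μ[m | MeasurableSpace.comap (fun ω => γ (m ω) + w ω) inferInstance]) ω) ^ 2 ∂μ)
        + ρ * ∫ ω, (γ (m ω)) ^ 2 ∂μ
      = (2 * a - 1) *
          (∫ ω, (m ω -
            (μ[m | MeasurableSpace.comap (fun ω => γ (m ω) + w ω) inferInstance]) ω) ^ 2 ∂μ)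
        + ρ * ∫ ω, (γ (m ω)) ^ 2 ∂μ
        + (a - 1) ^ 2 * ∫ ω, (m ω) ^ 2 ∂μ + b ^ 2) := by
  have hy : Measurable (fun ω => γ (m ω) + w ω) := (hγ.comp hm).add hw
  set G : MeasurableSpace Ω := MeasurableSpace.comap (fun ω => γ (m ω) + w ω) inferInstance
    with hG
  have h_le : G ≤ F := hy.comap_le
  haveI : SigmaFinite (μ.trim h_le) := by infer_instance
  set u : Ω → ℝ := μ[m | G] with hu
  have hu2 : MemLp u 2 μ := memLp_two_condexp h_le hm2
  have hm1 : Integrable m μ := hm2.integrable (by norm_num)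
  have hu1 : Integrable u μ := hu2.integrable (by norm_num)
  have hmm : Integrable (fun ω => m ω ^ 2) μ := hm2.integrable_sq
  have hmu : Integrable (fun ω => m ω * u ω) μ := integrable_mul_of_memLp_two hm2 hu2
  have huu : Integrable (fun ω => u ω * u ω) μ := integrable_mul_of_memLp_two hu2 hu2
  -- E[u] = 0
  have hEu : ∫ ω, u ω ∂μ = 0 := by
    rw [hu, integral_condExp h_le, hmean]
  -- orthogonality: ∫ m u = ∫ u u
  have horth : ∫ ω, m ω * u ω ∂μ = ∫ ω, u ω * u ω ∂μ := by
    have hum : Integrable (u * m) μ := by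
      refine hmu.congr (Filter.Eventually.of_forall fun ω => ?_)
      simp [mul_comm]
    have hpull : μ[u * m | G] =ᵐ[μ] u * μ[m | G] :=
      condExp_mul_of_stronglyMeasurable_left stronglyMeasurable_condExp hum hm1
    calc ∫ ω, m ω * u ω ∂μ = ∫ ω, (u * m) ω ∂μ := by
            refine integral_congr_ae (Filter.Eventually.of_forall fun ω => ?_)
            simp [mul_comm]
      _ = ∫ ω, (μ[u * m | G]) ω ∂μ := (integral_condExp h_le).symm
      _ = ∫ ω, (u * μ[m | G]) ω ∂μ := integral_congr_ae hpull
      _ = ∫ ω, u ω * u ω ∂μ := rfl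
  -- abbreviations
  set M := ∫ ω, m ω ^ 2 ∂μ with hM
  set U := ∫ ω, u ω * u ω ∂μ with hU
  -- expand both key integrals
  have hexp1 : ∫ ω, (a * m ω - b - u ω) ^ 2 ∂μ
      = a ^ 2 * M - 2 * a * U + U + b ^ 2 := by
    have i1 : Integrable (fun ω => a ^ 2 * m ω ^ 2) μ := hmm.const_mul _
    have i2 : Integrable (fun ω => (-(2 * a)) * (m ω * u ω)) μ := hmu.const_mul _
    have i3 : Integrable (fun ω => (-(2 * a * b)) * m ω) μ := hm1.const_mul _
    have i4 : Integrable (fun ω => (2 * b) * u ω) μ := hu1.const_mul _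
    have i5 : Integrable (fun ω => (b:ℝ) ^ 2) μ := integrable_const _
    have i45 : Integrable (fun ω => (2 * b) * u ω + b ^ 2) μ := i4.add i5
    have i345 : Integrable (fun ω => (-(2 * a * b)) * m ω + ((2 * b) * u ω + b ^ 2)) μ := i3.add i45
    have i2345 : Integrable (fun ω => u ω * u ω + ((-(2 * a * b)) * m ω + ((2 * b) * u ω + b ^ 2))) μ := huu.add i345
    have i12345 : Integrable (fun ω => (-(2 * a)) * (m ω * u ω) + (u ω * u ω + ((-(2 * a * b)) * m ω + ((2 * b) * u ω + b ^ 2)))) μ := i2.add i2345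
    have h1 : (fun ω => (a * m ω - b - u ω) ^ 2)
        = fun ω => a ^ 2 * m ω ^ 2 + ((-(2 * a)) * (m ω * u ω)
            + (u ω * u ω + ((-(2 * a * b)) * m ω + ((2 * b) * u ω + b ^ 2)))) := by
      funext ω; ring
    rw [h1, integral_add i1 i12345, integral_add i2 i2345, integral_add huu i345,
      integral_add i3 i45, integral_add i4 i5,
      integral_const_mul, integral_const_mul, integral_const_mul, integral_const_mul,
      integral_const, hmean, hEu, horth]
    simp only [← hM, ← hU, measure_univ, ENNReal.toReal_one, smul_eq_mul, probReal_univ]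
    ring
  have hexp2 : ∫ ω, (m ω - u ω) ^ 2 ∂μ = M - U := by
    have i2 : Integrable (fun ω => (-2 : ℝ) * (m ω * u ω)) μ := hmu.const_mul _
    have i23 : Integrable (fun ω => (-2 : ℝ) * (m ω * u ω) + u ω * u ω) μ := i2.add huu
    have h1 : (fun ω => (m ω - u ω) ^ 2)
        = fun ω => m ω ^ 2 + ((-2 : ℝ) * (m ω * u ω) + u ω * u ω) := by
      funext ω; ring
    rw [h1, integral_add hmm i23, integral_add i2 huu, integral_const_mul, horth]
    simp only [← hM, ← hU]
    ring
  constructor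
  · rw [hexp1, hexp2]; ring
  · rw [hexp1, hexp2]; ring
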